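/- Consider a feedforward network with L ≥ 2 layers in which all hidden layers have the same width h, the hidden activation σ is either the hyperbolic tangent tanh or the logistic sigmoid t ↦ 1/(1+e^{−t}), and the last layer output is f_θ(x) = s(a^L) where s(t) = 1/(1+e^{−t}), together with a dataset of m points. Then the MSE empirical risk θ ↦ (1/m)Σ_{i=1}^m (y_i − f_θ(x_i))², as a function of the parameters θ ∈ ℝ^ñ, is a Pfaffian function of format (3(L−2)+5, 2, m(h(L−1)+1)). -/

import Mathlib

open MvPolynomial

noncomputable section

/-- A Pfaffian chain of order `ℓ` and degree `α` on an open set `U ⊆ ℝ^ι`: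
real analytic functions whose partial derivatives are polynomials of total degree at most `α`
in the coordinates and the previous chain functions (including itself). -/
def IsPfaffianChain {ι : Type} [Fintype ι] [DecidableEq ι] (ℓ α : ℕ)
    (U : Set (ι → ℝ)) (f : Fin ℓ → (ι → ℝ) → ℝ) : Prop :=
  IsOpen U ∧ 1 ≤ α ∧ (∀ i, AnalyticOnNhd ℝ (f i) U) ∧
    ∀ (i : Fin ℓ) (j : ι), ∃ P : MvPolynomial (ι ⊕ Fin (i.1 + 1)) ℝ, P.totalDegree ≤ α ∧
      ∀ x ∈ U, fderiv ℝ (f i) x (Pi.single j 1) =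
        MvPolynomial.eval (Sum.elim x fun k : Fin (i.1 + 1) => f (Fin.castLE i.isLt k) x) P

/-- `g : ℝ^ι → ℝ` is a Pfaffian function of format `(α, β, ℓ)` on the open set `U`:
it is a polynomial of total degree at most `β` in the coordinates and the functions of a
Pfaffian chain of order `ℓ` and degree `α`. -/
def IsPfaffianWithFormat {ι : Type} [Fintype ι] [DecidableEq ι]
    (U : Set (ι → ℝ)) (g : (ι → ℝ) → ℝ) (α β ℓ : ℕ) : Prop :=
  ∃ f : Fin ℓ → (ι → ℝ) → ℝ, IsPfaffianChain ℓ α U f ∧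
    ∃ Q : MvPolynomial (ι ⊕ Fin ℓ) ℝ, Q.totalDegree ≤ β ∧
      ∀ x ∈ U, g x = MvPolynomial.eval (Sum.elim x fun k => f k x) Q

/-- Index set for the parameters of a feedforward network with `L` layers and widths `n`:
the augmented weight matrix of layer `l+1` (1-based) has shape `n (l+1) × (n l + 1)`,
column `0` being the bias. -/
abbrev ParamIdx (L : ℕ) (n : ℕ → ℕ) : Type :=
  Σ l : Fin L, Fin (n (l.1 + 1)) × Fin (n l.1 + 1)

/-- Entry `(j, i)` of the augmented weight matrix of (1-based) layer `l+1`. -/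
def netWeight {L : ℕ} {n : ℕ → ℕ} (θ : ParamIdx L n → ℝ) (l : ℕ)
    (j : Fin (n (l + 1))) (i : Fin (n l + 1)) : ℝ :=
  if hl : l < L then θ ⟨⟨l, hl⟩, (j, i)⟩ else 0

/-- Augmented layer outputs: `netZ σ θ x l = z^l = (1, σ (a^l))`, with `z^0 = (1, x)`. -/
def netZ {L : ℕ} {n : ℕ → ℕ} (σ : ℝ → ℝ) (θ : ParamIdx L n → ℝ) (x : Fin (n 0) → ℝ) :
    (l : ℕ) → Fin (n l + 1) → ℝ
  | 0 => Fin.cons 1 x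
  | l + 1 => Fin.cons 1 fun j => σ (∑ i, netWeight θ l j i * netZ σ θ x l i)

/-- Preactivations: `netPreact σ θ x l = a^{l+1} = W^{l+1} z^l` (1-based layer `l+1`). -/
def netPreact {L : ℕ} {n : ℕ → ℕ} (σ : ℝ → ℝ) (θ : ParamIdx L n → ℝ) (x : Fin (n 0) → ℝ)
    (l : ℕ) (j : Fin (n (l + 1))) : ℝ :=
  ∑ i, netWeight θ l j i * netZ σ θ x l i

/-- Output of the network with a linear last layer: `a^L` (a scalar, since `n L = 1`). -/
def netOutLin {L : ℕ} {n : ℕ → ℕ} (σ : ℝ → ℝ) (θ : ParamIdx L n → ℝ)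
    (x : Fin (n 0) → ℝ) : ℝ :=
  ∑ j, netPreact σ θ x (L - 1) j

/-- The logistic sigmoid. -/
def logisticFn (t : ℝ) : ℝ := 1 / (1 + Real.exp (-t))




theorem logistic_analyticAt (t : ℝ) : AnalyticAt ℝ logisticFn t := by
  have h1 : AnalyticAt ℝ (fun s : ℝ => 1 + Real.exp (-s)) t :=
    analyticAt_const.add (analyticAt_rexp.comp (analyticAt_id.neg))
  have hpos : (1 : ℝ) + Real.exp (-t) ≠ 0 := by positivity
  exact analyticAt_const.div h1 hpos

theorem logistic_hasDerivAt (t : ℝ) :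
    HasDerivAt logisticFn (logisticFn t - logisticFn t ^ 2) t := by
  have hpos : 0 < 1 + Real.exp (-t) := by positivity
  have hd : HasDerivAt (fun s : ℝ => 1 + Real.exp (-s)) (-Real.exp (-t)) t := by
    simpa using ((Real.hasDerivAt_exp (-t)).comp t ((hasDerivAt_id t).neg)).const_add 1
  have := (hasDerivAt_const t (1:ℝ)).fun_div hd hpos.ne'
  refine this.congr_deriv ?_
  unfold logisticFn
  field_simp
  ring

theorem tanh_analyticAt (t : ℝ) : AnalyticAt ℝ Real.tanh t := by
  have hs : AnalyticAt ℝ Real.sinh t := by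
    have : Real.sinh = fun x : ℝ => (Real.exp x - Real.exp (-x)) / 2 :=
      funext fun x => Real.sinh_eq x
    rw [this]
    exact (analyticAt_rexp.sub (analyticAt_rexp.comp analyticAt_id.neg)).div
      analyticAt_const two_ne_zero
  have hc : AnalyticAt ℝ Real.cosh t := by
    have : Real.cosh = fun x : ℝ => (Real.exp x + Real.exp (-x)) / 2 :=
      funext fun x => Real.cosh_eq x
    rw [this]
    exact (analyticAt_rexp.add (analyticAt_rexp.comp analyticAt_id.neg)).div
      analyticAt_const two_ne_zero
  have : Real.tanh = fun x => Real.sinh x / Real.cosh x :=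
    funext fun x => Real.tanh_eq_sinh_div_cosh x
  rw [this]
  exact hs.div hc (Real.cosh_pos t).ne'

theorem tanh_hasDerivAt (t : ℝ) :
    HasDerivAt Real.tanh (1 - Real.tanh t ^ 2) t := by
  have h := (Real.hasDerivAt_sinh t).fun_div (Real.hasDerivAt_cosh t) (Real.cosh_pos t).ne'
  have he : Real.tanh = fun x => Real.sinh x / Real.cosh x :=
    funext fun x => Real.tanh_eq_sinh_div_cosh x
  rw [he]
  refine h.congr_deriv ?_
  have h2 := Real.cosh_sq_sub_sinh_sq t
  have hc := (Real.cosh_pos t).ne'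
  field_simp


variable {I : Type} [Fintype I] [DecidableEq I]
set_option linter.unusedSectionVars false

def GoodP (chain : ℕ → (I → ℝ) → ℝ) (c d : ℕ) (g : (I → ℝ) → ℝ) : Prop :=
  ∃ P : MvPolynomial (I ⊕ Fin c) ℝ, P.totalDegree ≤ d ∧
    ∀ θ : I → ℝ, g θ = MvPolynomial.eval (Sum.elim θ fun k : Fin c => chain k.1 θ) P

namespace GoodP

variable {chain : ℕ → (I → ℝ) → ℝ} {c d d₁ d₂ : ℕ} {g g₁ g₂ : (I → ℝ) → ℝ}

theorem congr (h : GoodP chain c d g₁) (he : ∀ θ, g₁ θ = g₂ θ) : GoodP chain c d g₂ := by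
  obtain ⟨P, hP, hev⟩ := h
  exact ⟨P, hP, fun θ => (he θ) ▸ hev θ⟩

theorem const (r : ℝ) : GoodP chain c d (fun _ => r) :=
  ⟨C r, by simp [totalDegree_C], fun θ => by simp⟩

theorem coord (w : I) (hd : 1 ≤ d) : GoodP chain c d (fun θ => θ w) :=
  ⟨X (Sum.inl w), by simpa [totalDegree_X] using hd, fun θ => by simp⟩

theorem chainvar (k : ℕ) (hk : k < c) (hd : 1 ≤ d) : GoodP chain c d (chain k) :=
  ⟨X (Sum.inr ⟨k, hk⟩), by simpa [totalDegree_X] using hd, fun θ => by simp⟩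

theorem add (h₁ : GoodP chain c d g₁) (h₂ : GoodP chain c d g₂) :
    GoodP chain c d (fun θ => g₁ θ + g₂ θ) := by
  obtain ⟨P₁, hP₁, he₁⟩ := h₁
  obtain ⟨P₂, hP₂, he₂⟩ := h₂
  exact ⟨P₁ + P₂, (totalDegree_add _ _).trans (max_le hP₁ hP₂),
    fun θ => by simp [he₁ θ, he₂ θ]⟩

theorem mul (h₁ : GoodP chain c d₁ g₁) (h₂ : GoodP chain c d₂ g₂) :
    GoodP chain c (d₁ + d₂) (fun θ => g₁ θ * g₂ θ) := by
  obtain ⟨P₁, hP₁, he₁⟩ := h₁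
  obtain ⟨P₂, hP₂, he₂⟩ := h₂
  exact ⟨P₁ * P₂, (totalDegree_mul _ _).trans (add_le_add hP₁ hP₂),
    fun θ => by simp [he₁ θ, he₂ θ]⟩

theorem mono_deg (hd : d₁ ≤ d₂) (h : GoodP chain c d₁ g) : GoodP chain c d₂ g := by
  obtain ⟨P, hP, he⟩ := h
  exact ⟨P, hP.trans hd, he⟩

theorem mono_c {c₁ c₂ : ℕ} (hc : c₁ ≤ c₂) (h : GoodP chain c₁ d g) : GoodP chain c₂ d g := by
  obtain ⟨P, hP, he⟩ := h
  refine ⟨rename (Sum.map id (Fin.castLE hc)) P,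
    (totalDegree_rename_le _ _).trans hP, fun θ => ?_⟩
  rw [eval_rename, he θ]
  have : ((Sum.elim θ fun k : Fin c₂ => chain k.1 θ) ∘ Sum.map id (Fin.castLE hc))
      = (Sum.elim θ fun k : Fin c₁ => chain k.1 θ) := by
    funext k; cases k <;> rfl
  rw [this]

theorem sum {γ : Type*} (s : Finset γ) (f : γ → (I → ℝ) → ℝ)
    (h : ∀ a ∈ s, GoodP chain c d (f a)) :
    GoodP chain c d (fun θ => ∑ a ∈ s, f a θ) := by
  classical
  induction s using Finset.induction with
  | empty => exact (const 0).congr (by simp)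
  | @insert a s hne ih =>
    exact ((h a (Finset.mem_insert_self a s)).add
      (ih fun b hb => h b (Finset.mem_insert_of_mem hb))).congr
      (fun θ => by rw [Finset.sum_insert hne])

end GoodP

/-- partial derivative -/
def pdv (g : (I → ℝ) → ℝ) (w : I) (θ : I → ℝ) : ℝ := fderiv ℝ g θ (Pi.single w 1)

theorem pdv_const (r : ℝ) (w : I) (θ : I → ℝ) : pdv (fun _ => r) w θ = 0 := by
  simp [pdv, fderiv_const]

theorem pdv_coord (a w : I) (θ : I → ℝ) :
    pdv (fun θ => θ a) w θ = if a = w then 1 else 0 := by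
  have : fderiv ℝ (fun θ : I → ℝ => θ a) θ = ContinuousLinearMap.proj a :=
    ((ContinuousLinearMap.proj a : (I → ℝ) →L[ℝ] ℝ).hasFDerivAt).fderiv
  simp [pdv, this, Pi.single_apply]

theorem pdv_sum {γ : Type*} (s : Finset γ) (f : γ → (I → ℝ) → ℝ) (w : I) (θ : I → ℝ)
    (h : ∀ a ∈ s, DifferentiableAt ℝ (f a) θ) :
    pdv (fun θ => ∑ a ∈ s, f a θ) w θ = ∑ a ∈ s, pdv (f a) w θ := by
  rw [pdv, fderiv_fun_sum h]
  simp [pdv]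

theorem pdv_mul (f g : (I → ℝ) → ℝ) (w : I) (θ : I → ℝ)
    (hf : DifferentiableAt ℝ f θ) (hg : DifferentiableAt ℝ g θ) :
    pdv (fun θ => f θ * g θ) w θ = f θ * pdv g w θ + g θ * pdv f w θ := by
  rw [pdv, fderiv_fun_mul hf hg]
  simp [pdv, smul_eq_mul]

theorem pdv_comp (σ : ℝ → ℝ) (u : (I → ℝ) → ℝ) (y : ℝ) (w : I) (θ : I → ℝ)
    (hσ : HasDerivAt σ y (u θ)) (hu : DifferentiableAt ℝ u θ) :
    pdv (fun θ => σ (u θ)) w θ = y * pdv u w θ := by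
  rw [pdv, show (fun θ => σ (u θ)) = σ ∘ u from rfl,
    (hσ.comp_hasFDerivAt θ hu.hasFDerivAt).fderiv]
  simp [pdv, smul_eq_mul]
theorem netZ_zero {L : ℕ} {n : ℕ → ℕ} (σ : ℝ → ℝ) (θ : ParamIdx L n → ℝ)
    (x : Fin (n 0) → ℝ) (l : ℕ) : netZ σ θ x l 0 = 1 := by
  cases l <;> simp [netZ]

theorem netZ_succ {L : ℕ} {n : ℕ → ℕ} (σ : ℝ → ℝ) (θ : ParamIdx L n → ℝ)
    (x : Fin (n 0) → ℝ) (l : ℕ) (k : Fin (n (l + 1))) :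
    netZ σ θ x (l + 1) k.succ = σ (netPreact σ θ x l k) := by
  simp [netZ, netPreact]

def chainAll (L h : ℕ) (n : ℕ → ℕ) (hhid : ∀ l : ℕ, 1 ≤ l → l ≤ L - 1 → n l = h)
    (σ : ℝ → ℝ) {m : ℕ} (x : Fin m → Fin (n 0) → ℝ) (t : ℕ)
    (θ : ParamIdx L n → ℝ) : ℝ :=
  if hp : t / (h * (L - 1) + 1) < m then
    if hr : t % (h * (L - 1) + 1) < h * (L - 1) then
      σ (netPreact σ θ (x ⟨_, hp⟩) (t % (h * (L - 1) + 1) / h)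
        ⟨t % (h * (L - 1) + 1) % h, by
          have hh : 0 < h := Nat.pos_of_ne_zero (by rintro rfl; simp at hr)
          have h1 : t % (h * (L - 1) + 1) / h < L - 1 :=
            (Nat.div_lt_iff_lt_mul hh).2 (by rw [Nat.mul_comm (L - 1) h]; exact hr)
          rw [hhid (t % (h * (L - 1) + 1) / h + 1) (Nat.le_add_left 1 _) (by omega)]
          exact Nat.mod_lt _ hh⟩)
    else logisticFn (netOutLin σ θ (x ⟨_, hp⟩))
  else 0

theorem chainAll_hidden {L h m : ℕ} {n : ℕ → ℕ}
    (hhid : ∀ l : ℕ, 1 ≤ l → l ≤ L - 1 → n l = h) (σ : ℝ → ℝ)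
    (x : Fin m → Fin (n 0) → ℝ) (p : Fin m) (l : ℕ) (hl : l + 1 ≤ L - 1)
    (j : Fin (n (l + 1))) (θ : ParamIdx L n → ℝ) :
    chainAll L h n hhid σ x (p.1 * (h * (L - 1) + 1) + (l * h + j.1)) θ
      = σ (netPreact σ θ (x p) l j) := by
  have hjh : j.1 < h := by rw [← hhid (l + 1) (by omega) hl]; exact j.2
  have hh : 0 < h := lt_of_le_of_lt (Nat.zero_le _) hjh
  set B := h * (L - 1) + 1 with hB
  set t := p.1 * B + (l * h + j.1) with htdef
  have hlt : l * h + j.1 < h * (L - 1) := by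
    calc l * h + j.1 < (l + 1) * h := by rw [Nat.add_mul]; omega
    _ ≤ (L - 1) * h := Nat.mul_le_mul_right _ (by omega)
    _ = h * (L - 1) := Nat.mul_comm _ _
  have hdiv : t / B = p.1 := by
    rw [htdef, Nat.mul_comm p.1 B, Nat.add_comm, Nat.add_mul_div_left _ _ (by omega : 0 < B),
      Nat.div_eq_of_lt (by omega), Nat.zero_add]
  have hmod : t % B = l * h + j.1 := by
    rw [htdef, Nat.mul_comm p.1 B, Nat.add_comm, Nat.add_mul_mod_self_left,
      Nat.mod_eq_of_lt (by omega)]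
  have hld : t % B / h = l := by
    rw [hmod, Nat.mul_comm l h, Nat.mul_add_div hh, Nat.div_eq_of_lt hjh, Nat.add_zero]
  have hjd : t % B % h = j.1 := by
    rw [hmod, Nat.mul_comm l h, Nat.mul_add_mod, Nat.mod_eq_of_lt hjh]
  have key : ∀ (p₁ p₂ : Fin m) (l₁ l₂ : ℕ) (j₁ : Fin (n (l₁ + 1))) (j₂ : Fin (n (l₂ + 1))),
      p₁ = p₂ → l₁ = l₂ → j₁.1 = j₂.1 →
      σ (netPreact σ θ (x p₁) l₁ j₁) = σ (netPreact σ θ (x p₂) l₂ j₂) := by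
    rintro p₁ p₂ l₁ l₂ j₁ j₂ rfl rfl hj
    exact congrArg σ (congrArg (netPreact σ θ (x p₁) l₁) (Fin.ext hj))
  rw [chainAll, dif_pos (show t / B < m from hdiv ▸ p.2), dif_pos (show t % B < h * (L - 1) from hmod ▸ hlt)]
  exact key _ _ _ _ _ _ (Fin.ext hdiv) hld hjd

theorem chainAll_out {L h m : ℕ} {n : ℕ → ℕ}
    (hhid : ∀ l : ℕ, 1 ≤ l → l ≤ L - 1 → n l = h) (σ : ℝ → ℝ)
    (x : Fin m → Fin (n 0) → ℝ) (p : Fin m) (θ : ParamIdx L n → ℝ) :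
    chainAll L h n hhid σ x (p.1 * (h * (L - 1) + 1) + h * (L - 1)) θ
      = logisticFn (netOutLin σ θ (x p)) := by
  set B := h * (L - 1) + 1 with hB
  set t := p.1 * B + h * (L - 1) with htdef
  have hdiv : t / B = p.1 := by
    rw [htdef, Nat.mul_comm p.1 B, Nat.add_comm, Nat.add_mul_div_left _ _ (by omega : 0 < B),
      Nat.div_eq_of_lt (by omega), Nat.zero_add]
  have hmod : t % B = h * (L - 1) := by
    rw [htdef, Nat.mul_comm p.1 B, Nat.add_comm, Nat.add_mul_mod_self_left,
      Nat.mod_eq_of_lt (by omega)]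
  rw [chainAll, dif_pos (show t / B < m from hdiv ▸ p.2),
    dif_neg (show ¬ t % B < h * (L - 1) from hmod ▸ lt_irrefl _)]
  exact congrArg logisticFn (congrArg (netOutLin σ θ) (congrArg x (Fin.ext hdiv)))

theorem statement5 (L : ℕ) (hL : 2 ≤ L) (h : ℕ) (n : ℕ → ℕ)
    (hhid : ∀ l : ℕ, 1 ≤ l → l ≤ L - 1 → n l = h) (hout : n L = 1)
    (σ : ℝ → ℝ) (hσ : σ = Real.tanh ∨ σ = logisticFn)
    (m : ℕ) (x : Fin m → Fin (n 0) → ℝ) (y : Fin m → ℝ) :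
    IsPfaffianWithFormat (ι := ParamIdx L n) Set.univ
      (fun θ => (1 / (m : ℝ)) * ∑ p, (y p - logisticFn (netOutLin σ θ (x p))) ^ 2)
      (3 * (L - 2) + 5) 2 (m * (h * (L - 1) + 1)) := by
  classical
  have hσa : ∀ t, AnalyticAt ℝ σ t := by
    rcases hσ with rfl | rfl
    · exact tanh_analyticAt
    · exact logistic_analyticAt
  obtain ⟨c₀, c₁, c₂, hσd⟩ : ∃ c₀ c₁ c₂ : ℝ, ∀ t,
      HasDerivAt σ (c₀ + c₁ * σ t + c₂ * σ t ^ 2) t := by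
    rcases hσ with rfl | rfl
    · exact ⟨1, 0, -1, fun t => by
        have := tanh_hasDerivAt t
        convert this using 1; ring⟩
    · exact ⟨0, 1, -1, fun t => by
        have := logistic_hasDerivAt t
        convert this using 1; ring⟩
  -- weight coordinates are analytic
  have hWA : ∀ (l : ℕ) (j : Fin (n (l + 1))) (i : Fin (n l + 1)) (θ0 : ParamIdx L n → ℝ),
      AnalyticAt ℝ (fun θ => netWeight θ l j i) θ0 := by
    intro l j i θ0
    by_cases hl : l < L
    · simp only [netWeight, dif_pos hl]
      exact (ContinuousLinearMap.proj (R := ℝ) (φ := fun _ : ParamIdx L n => ℝ)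
        ⟨⟨l, hl⟩, (j, i)⟩).analyticAt θ0
    · simp only [netWeight, dif_neg hl]
      exact analyticAt_const
  -- the Good bound for derivatives of preactivations
  have mkPre : ∀ (p : Fin m) (l : ℕ), ∀ (hlL : l < L), (1 ≤ l → n l = h) →
      ((∀ (i : Fin (n l + 1)) (θ0 : (ParamIdx L n → ℝ)), AnalyticAt ℝ (fun θ => netZ σ θ (x p) l i) θ0) ∧
     (∀ (i : Fin (n l + 1)) (c : ℕ), (p).1 * (h * (L - 1) + 1) + l * h ≤ c →
        GoodP (chainAll L h n hhid σ x) c (if l = 0 then 0 else 1) (fun θ => netZ σ θ (x p) l i)) ∧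
     (l = 0 → ∀ (i : Fin (n l + 1)) (w : ParamIdx L n) (θ : ParamIdx L n → ℝ),
        pdv (fun θ => netZ σ θ (x p) l i) w θ = 0) ∧
     (∀ (i : Fin (n l + 1)) (w : ParamIdx L n) (c : ℕ), (p).1 * (h * (L - 1) + 1) + (l - 1) * h + i.1 ≤ c →
        GoodP (chainAll L h n hhid σ x) c (if l = 0 then 0 else 3 * l - 1)
          (fun θ => pdv (fun θ => netZ σ θ (x p) l i) w θ))) →
      ∀ (j : Fin (n (l + 1))) (w : ParamIdx L n) (c : ℕ), p.1 * (h * (L - 1) + 1) + l * h ≤ c →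
        GoodP (chainAll L h n hhid σ x) c (if l = 0 then 0 else 1 + (3 * l - 1))
          (fun θ => pdv (fun θ => netPreact σ θ (x p) l j) w θ) := by
    rintro p l hlL hnl ⟨hA, hV, hP0, hPu⟩ j w c hc
    have hdc : ∀ (i : Fin (n l + 1)) (θ : ParamIdx L n → ℝ), DifferentiableAt ℝ
        (fun θ : ParamIdx L n → ℝ => θ (⟨⟨l, hlL⟩, (j, i)⟩ : ParamIdx L n)) θ :=
      fun i θ => (ContinuousLinearMap.proj (R := ℝ) (φ := fun _ : ParamIdx L n => ℝ)
        ⟨⟨l, hlL⟩, (j, i)⟩).differentiableAt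
    have hform : ∀ θ : ParamIdx L n → ℝ, pdv (fun θ => netPreact σ θ (x p) l j) w θ
        = ∑ i : Fin (n l + 1), (θ ⟨⟨l, hlL⟩, (j, i)⟩ * pdv (fun θ => netZ σ θ (x p) l i) w θ
            + netZ σ θ (x p) l i * (if (⟨⟨l, hlL⟩, (j, i)⟩ : ParamIdx L n) = w then 1 else 0)) := by
      intro θ
      have h1 : (fun θ : ParamIdx L n → ℝ => netPreact σ θ (x p) l j)
          = fun θ => ∑ i : Fin (n l + 1), θ ⟨⟨l, hlL⟩, (j, i)⟩ * netZ σ θ (x p) l i := by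
        funext θ
        simp only [netPreact, netWeight, dif_pos hlL]
      rw [h1, pdv_sum _ _ w θ (fun i _ => (hdc i θ).fun_mul ((hA i θ).differentiableAt))]
      refine Finset.sum_congr rfl fun i _ => ?_
      rw [pdv_mul _ _ w θ (hdc i θ) ((hA i θ).differentiableAt), pdv_coord]
    refine GoodP.congr ?_ (fun θ => (hform θ).symm)
    refine GoodP.sum _ _ (fun i _ => ?_)
    rcases Nat.eq_zero_or_pos l with rfl | hl0
    · rw [if_pos rfl]
      refine GoodP.add ?_ ?_
      · exact (GoodP.const 0).congr (fun θ => by rw [hP0 rfl i w θ, mul_zero])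
      · exact ((hV i c hc).mul (GoodP.const (d := 0) _)).mono_deg (by simp)
    · rw [if_neg (by omega)]
      have hnlh : n l = h := hnl hl0
      have hbound : p.1 * (h * (L - 1) + 1) + (l - 1) * h + i.1 ≤ c := by
        have h8 : (l - 1 + 1) * h = l * h := by rw [Nat.sub_add_cancel hl0]
        have h9 : (l - 1 + 1) * h = (l - 1) * h + h := Nat.succ_mul _ _
        have h7 : i.1 ≤ h := by have := i.2; omega
        omega
      refine GoodP.add ?_ ?_
      · exact (GoodP.coord _ le_rfl).mul
          ((hPu i w c hbound).mono_deg (le_of_eq (if_neg (by omega))))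
      · exact ((hV i c hc).mul (GoodP.const (d := 0) _)).mono_deg (by rw [if_neg (by omega)]; omega)
  -- the Good bound for derivatives of hidden units
  have mkSucc : ∀ (p : Fin m) (l : ℕ), ∀ (hl1 : l + 1 ≤ L - 1),
      ((∀ (i : Fin (n l + 1)) (θ0 : (ParamIdx L n → ℝ)), AnalyticAt ℝ (fun θ => netZ σ θ (x p) l i) θ0) ∧
     (∀ (i : Fin (n l + 1)) (c : ℕ), (p).1 * (h * (L - 1) + 1) + l * h ≤ c →
        GoodP (chainAll L h n hhid σ x) c (if l = 0 then 0 else 1) (fun θ => netZ σ θ (x p) l i)) ∧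
     (l = 0 → ∀ (i : Fin (n l + 1)) (w : ParamIdx L n) (θ : ParamIdx L n → ℝ),
        pdv (fun θ => netZ σ θ (x p) l i) w θ = 0) ∧
     (∀ (i : Fin (n l + 1)) (w : ParamIdx L n) (c : ℕ), (p).1 * (h * (L - 1) + 1) + (l - 1) * h + i.1 ≤ c →
        GoodP (chainAll L h n hhid σ x) c (if l = 0 then 0 else 3 * l - 1)
          (fun θ => pdv (fun θ => netZ σ θ (x p) l i) w θ))) →
      ∀ (k : Fin (n (l + 1))) (w : ParamIdx L n) (c : ℕ), p.1 * (h * (L - 1) + 1) + l * h + k.1 + 1 ≤ c →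
        GoodP (chainAll L h n hhid σ x) c (3 * (l + 1) - 1)
          (fun θ => pdv (fun θ => netZ σ θ (x p) (l + 1) k.succ) w θ) := by
    rintro p l hl1 ⟨hA, hV, hP0, hPu⟩ k w c hc
    have hlL : l < L := by omega
    have hpre := mkPre p l hlL (fun h1 => hhid l h1 (by omega)) ⟨hA, hV, hP0, hPu⟩ k w c (by omega)
    have heq : (fun θ : ParamIdx L n → ℝ => netZ σ θ (x p) (l + 1) k.succ)
        = fun θ => σ (netPreact σ θ (x p) l k) := funext fun θ => netZ_succ σ θ (x p) l k
    rw [heq]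
    have hdiffpre : ∀ θ : ParamIdx L n → ℝ,
        DifferentiableAt ℝ (fun θ => netPreact σ θ (x p) l k) θ := by
      intro θ
      have : AnalyticAt ℝ (fun θ : ParamIdx L n → ℝ =>
          ∑ i, netWeight θ l k i * netZ σ θ (x p) l i) θ :=
        Finset.analyticAt_fun_sum _ (fun i _ => (hWA l k i θ).fun_mul (hA i θ))
      exact this.differentiableAt
    have hcv : ∀ θ, (chainAll L h n hhid σ x) (p.1 * (h * (L - 1) + 1) + (l * h + k.1)) θ = σ (netPreact σ θ (x p) l k) :=
      fun θ => chainAll_hidden hhid σ x p l hl1 k θ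
    have hform : ∀ θ, pdv (fun θ => σ (netPreact σ θ (x p) l k)) w θ
        = (c₀ + c₁ * (chainAll L h n hhid σ x) (p.1 * (h * (L - 1) + 1) + (l * h + k.1)) θ
            + c₂ * ((chainAll L h n hhid σ x) (p.1 * (h * (L - 1) + 1) + (l * h + k.1)) θ * (chainAll L h n hhid σ x) (p.1 * (h * (L - 1) + 1) + (l * h + k.1)) θ))
          * pdv (fun θ => netPreact σ θ (x p) l k) w θ := by
      intro θ
      rw [pdv_comp σ _ _ w θ (hσd _) (hdiffpre θ), hcv θ, pow_two]
    refine GoodP.congr ?_ (fun θ => (hform θ).symm)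
    have hltc : p.1 * (h * (L - 1) + 1) + (l * h + k.1) < c := by omega
    have hcvG : GoodP (chainAll L h n hhid σ x) c 1 ((chainAll L h n hhid σ x) (p.1 * (h * (L - 1) + 1) + (l * h + k.1))) :=
      GoodP.chainvar _ hltc le_rfl
    have t12 : GoodP (chainAll L h n hhid σ x) c 2 (fun θ => c₀ + c₁ * (chainAll L h n hhid σ x) (p.1 * (h * (L - 1) + 1) + (l * h + k.1)) θ) :=
      (GoodP.const c₀).add (((GoodP.const (d := 0) c₁).mul hcvG).mono_deg (by omega))
    have t3 : GoodP (chainAll L h n hhid σ x) c 2 (fun θ => c₂ * ((chainAll L h n hhid σ x) (p.1 * (h * (L - 1) + 1) + (l * h + k.1)) θ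
        * (chainAll L h n hhid σ x) (p.1 * (h * (L - 1) + 1) + (l * h + k.1)) θ)) :=
      ((GoodP.const (d := 0) c₂).mul (hcvG.mul hcvG)).mono_deg (by omega)
    have hpreG := hpre.mono_deg (show (if l = 0 then 0 else 1 + (3 * l - 1)) ≤ 3 * l by
      rcases Nat.eq_zero_or_pos l with rfl | h0
      · simp
      · rw [if_neg (by omega)]; omega)
    exact ((t12.add t3).mul hpreG).mono_deg (by omega)
  -- main induction over layers
  have main : ∀ (p : Fin m) (l : ℕ), l ≤ L - 1 → ((∀ (i : Fin (n l + 1)) (θ0 : (ParamIdx L n → ℝ)), AnalyticAt ℝ (fun θ => netZ σ θ (x p) l i) θ0) ∧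
     (∀ (i : Fin (n l + 1)) (c : ℕ), (p).1 * (h * (L - 1) + 1) + l * h ≤ c →
        GoodP (chainAll L h n hhid σ x) c (if l = 0 then 0 else 1) (fun θ => netZ σ θ (x p) l i)) ∧
     (l = 0 → ∀ (i : Fin (n l + 1)) (w : ParamIdx L n) (θ : ParamIdx L n → ℝ),
        pdv (fun θ => netZ σ θ (x p) l i) w θ = 0) ∧
     (∀ (i : Fin (n l + 1)) (w : ParamIdx L n) (c : ℕ), (p).1 * (h * (L - 1) + 1) + (l - 1) * h + i.1 ≤ c →
        GoodP (chainAll L h n hhid σ x) c (if l = 0 then 0 else 3 * l - 1)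
          (fun θ => pdv (fun θ => netZ σ θ (x p) l i) w θ))) := by
    intro p l
    induction l with
    | zero =>
      intro _
      have hz0f : ∀ i : Fin (n 0 + 1), (fun θ : ParamIdx L n → ℝ => netZ σ θ (x p) 0 i)
          = fun _ => Fin.cons (α := fun _ => ℝ) 1 (x p) i := fun i => funext fun θ => rfl
      refine ⟨?_, ?_, ?_, ?_⟩
      · intro i θ0; rw [hz0f i]; exact analyticAt_const
      · intro i c _; rw [hz0f i]; exact GoodP.const _
      · intro _ i w θ; rw [hz0f i]; exact pdv_const _ w θ
      · intro i w c _
        rw [hz0f i]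
        exact (GoodP.const 0).congr (fun θ => (pdv_const _ w θ).symm)
    | succ l ih =>
      intro hl1
      obtain ⟨hA, hV, hP0, hPu⟩ := ih (by omega)
      have hkh : ∀ k : Fin (n (l + 1)), k.1 < h := fun k => by
        rw [← hhid (l + 1) (by omega) hl1]; exact k.2
      refine ⟨?_, ?_, ?_, ?_⟩
      · intro i θ0
        refine Fin.cases ?_ ?_ i
        · have h0 : (fun θ : ParamIdx L n → ℝ => netZ σ θ (x p) (l + 1) 0) = fun _ => (1 : ℝ) :=
            funext fun θ => netZ_zero σ θ (x p) (l + 1)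
          rw [h0]; exact analyticAt_const
        · intro k
          have hs : (fun θ : ParamIdx L n → ℝ => netZ σ θ (x p) (l + 1) k.succ)
              = fun θ => σ (netPreact σ θ (x p) l k) := funext fun θ => netZ_succ σ θ (x p) l k
          rw [hs]
          exact (hσa _).comp (Finset.analyticAt_fun_sum _ (fun i' _ => (hWA l k i' θ0).fun_mul (hA i' θ0)))
      · intro i c hc
        refine Fin.cases ?_ ?_ i
        · exact (GoodP.const 1).congr (fun θ => (netZ_zero σ θ (x p) (l + 1)).symm)
        · intro k
          have hlt : p.1 * (h * (L - 1) + 1) + (l * h + k.1) < c := by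
            have h1 := hkh k
            have h2 : (l + 1) * h = l * h + h := Nat.succ_mul l h
            omega
          refine (GoodP.chainvar _ hlt (by rw [if_neg (Nat.succ_ne_zero l)])).congr (fun θ => ?_)
          rw [chainAll_hidden hhid σ x p l hl1 k θ]
          exact (netZ_succ σ θ (x p) l k).symm
      · intro h0; exact absurd h0 (Nat.succ_ne_zero l)
      · intro i w c
        refine Fin.cases ?_ ?_ i
        · intro _
          have h0 : (fun θ : ParamIdx L n → ℝ => netZ σ θ (x p) (l + 1) 0) = fun _ => (1 : ℝ) :=
            funext fun θ => netZ_zero σ θ (x p) (l + 1)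
          rw [h0]
          exact (GoodP.const 0).congr (fun θ => (pdv_const 1 w θ).symm)
        · intro k hc
          simp only [Nat.add_sub_cancel, Fin.val_succ] at hc
          exact (mkSucc p l hl1 ⟨hA, hV, hP0, hPu⟩ k w c (by omega)).mono_deg
            (le_of_eq (if_neg (Nat.succ_ne_zero l)).symm)
  -- decoding of chain indices
  have hdecode : ∀ i : Fin (m * (h * (L - 1) + 1)),
      (∃ (p : Fin m) (l : ℕ), (l + 1 ≤ L - 1) ∧ ∃ kf : Fin (n (l + 1)),
        i.1 = p.1 * (h * (L - 1) + 1) + (l * h + kf.1) ∧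
        (chainAll L h n hhid σ x) i.1 = fun θ => netZ σ θ (x p) (l + 1) kf.succ) ∨
      (∃ p : Fin m, i.1 = p.1 * (h * (L - 1) + 1) + h * (L - 1) ∧
        (chainAll L h n hhid σ x) i.1 = fun θ => logisticFn (netOutLin σ θ (x p))) := by
    intro i
    have hBpos : 0 < (h * (L - 1) + 1) := Nat.succ_pos _
    have hp : i.1 / (h * (L - 1) + 1) < m := (Nat.div_lt_iff_lt_mul hBpos).2 i.2
    by_cases hr : i.1 % (h * (L - 1) + 1) < h * (L - 1)
    · left
      have hh : 0 < h := Nat.pos_of_ne_zero (by rintro rfl; simp at hr)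
      have hlL2 : i.1 % (h * (L - 1) + 1) / h < L - 1 :=
        (Nat.div_lt_iff_lt_mul hh).2 (by rw [Nat.mul_comm (L - 1) h]; exact hr)
      have hkn : i.1 % (h * (L - 1) + 1) % h < n (i.1 % (h * (L - 1) + 1) / h + 1) := by
        rw [hhid _ (Nat.le_add_left 1 _) (by omega)]
        exact Nat.mod_lt _ hh
      have hieq : i.1 = i.1 / (h * (L - 1) + 1) * (h * (L - 1) + 1) + (i.1 % (h * (L - 1) + 1) / h * h + i.1 % (h * (L - 1) + 1) % h) := by
        have h1 := Nat.div_add_mod i.1 (h * (L - 1) + 1)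
        have h2 := Nat.div_add_mod (i.1 % (h * (L - 1) + 1)) h
        have h3 : i.1 / (h * (L - 1) + 1) * (h * (L - 1) + 1) = (h * (L - 1) + 1) * (i.1 / (h * (L - 1) + 1)) := Nat.mul_comm _ _
        have h4 : i.1 % (h * (L - 1) + 1) / h * h = h * (i.1 % (h * (L - 1) + 1) / h) := Nat.mul_comm _ _
        omega
      refine ⟨⟨_, hp⟩, i.1 % (h * (L - 1) + 1) / h, by omega, ⟨_, hkn⟩, hieq, ?_⟩
      funext θ
      conv_lhs => rw [hieq]
      exact (chainAll_hidden hhid σ x ⟨_, hp⟩ _ (by omega) ⟨_, hkn⟩ θ).trans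
        (netZ_succ σ θ _ _ _).symm
    · right
      have hre : i.1 % (h * (L - 1) + 1) = h * (L - 1) := by
        have := Nat.mod_lt i.1 hBpos
        omega
      have hieq : i.1 = i.1 / (h * (L - 1) + 1) * (h * (L - 1) + 1) + h * (L - 1) := by
        have h1 := Nat.div_add_mod i.1 (h * (L - 1) + 1)
        have h3 : i.1 / (h * (L - 1) + 1) * (h * (L - 1) + 1) = (h * (L - 1) + 1) * (i.1 / (h * (L - 1) + 1)) := Nat.mul_comm _ _
        omega
      refine ⟨⟨_, hp⟩, hieq, ?_⟩
      funext θ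
      conv_lhs => rw [hieq]
      exact chainAll_out hhid σ x ⟨_, hp⟩ θ
  -- assemble
  refine ⟨fun i => (chainAll L h n hhid σ x) i.1, ⟨isOpen_univ, by omega, ?_, ?_⟩, ?_⟩
  · -- analyticity of the chain
    intro i θ0 _
    show AnalyticAt ℝ ((chainAll L h n hhid σ x) i.1) θ0
    rcases hdecode i with ⟨p, l, hl1, kf, hieq, hfe⟩ | ⟨p, hieq, hfe⟩
    · rw [hfe]
      exact (main p (l + 1) hl1).1 kf.succ θ0
    · rw [hfe]
      exact (logistic_analyticAt _).comp (Finset.analyticAt_fun_sum _ (fun jj _ =>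
        Finset.analyticAt_fun_sum _ (fun i' _ =>
          (hWA (L - 1) jj i' θ0).fun_mul ((main p (L - 1) le_rfl).1 i' θ0))))
  · -- derivative condition
    intro i w
    rcases hdecode i with ⟨p, l, hl1, kf, hieq, hfe⟩ | ⟨p, hieq, hfe⟩
    · obtain ⟨P, hdeg, hev⟩ :=
        (mkSucc p l hl1 (main p l (by omega)) kf w (i.1 + 1) (by omega)).mono_deg
          (show 3 * (l + 1) - 1 ≤ 3 * (L - 2) + 5 by omega)
      refine ⟨P, hdeg, fun θ _ => ?_⟩
      have hres : pdv ((chainAll L h n hhid σ x) i.1) w θ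
          = MvPolynomial.eval (Sum.elim θ fun k : Fin (i.1 + 1) => (chainAll L h n hhid σ x) k.1 θ) P := by
        rw [hfe]; exact hev θ
      exact hres
    · -- output unit
      have hmain := main p (L - 1) le_rfl
      have hprep := mkPre p (L - 1) (by omega) (fun _ => hhid (L - 1) (by omega) le_rfl) hmain
      have hanaPre : ∀ (jj : Fin (n (L - 1 + 1))) (θ : ParamIdx L n → ℝ),
          AnalyticAt ℝ (fun θ => netPreact σ θ (x p) (L - 1) jj) θ := fun jj θ =>
        Finset.analyticAt_fun_sum _ (fun i' _ => (hWA (L - 1) jj i' θ).fun_mul (hmain.1 i' θ))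
      have hdiffOut : ∀ θ : ParamIdx L n → ℝ,
          DifferentiableAt ℝ (fun θ => netOutLin σ θ (x p)) θ := fun θ =>
        (Finset.analyticAt_fun_sum _ (fun jj _ => hanaPre jj θ)).differentiableAt
      have hsv : ∀ θ, (chainAll L h n hhid σ x) i.1 θ = logisticFn (netOutLin σ θ (x p)) := fun θ => by
        rw [hfe]
      have hform : ∀ θ, pdv (fun θ => logisticFn (netOutLin σ θ (x p))) w θ
          = ((chainAll L h n hhid σ x) i.1 θ - (chainAll L h n hhid σ x) i.1 θ * (chainAll L h n hhid σ x) i.1 θ)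
            * ∑ jj : Fin (n (L - 1 + 1)), pdv (fun θ => netPreact σ θ (x p) (L - 1) jj) w θ := by
        intro θ
        rw [pdv_comp logisticFn _ _ w θ (logistic_hasDerivAt _) (hdiffOut θ)]
        congr 1
        · rw [hsv θ, pow_two]
        · have h1 : (fun θ : ParamIdx L n → ℝ => netOutLin σ θ (x p))
              = fun θ => ∑ jj : Fin (n (L - 1 + 1)), netPreact σ θ (x p) (L - 1) jj := rfl
          rw [h1, pdv_sum _ _ w θ (fun jj _ => (hanaPre jj θ).differentiableAt)]
      have hGoal : GoodP (chainAll L h n hhid σ x) (i.1 + 1) (3 * (L - 2) + 5)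
          (fun θ => pdv (fun θ => logisticFn (netOutLin σ θ (x p))) w θ) := by
        refine GoodP.congr ?_ (fun θ => (hform θ).symm)
        have hcvG : GoodP (chainAll L h n hhid σ x) (i.1 + 1) 1 ((chainAll L h n hhid σ x) i.1) := GoodP.chainvar _ (by omega) le_rfl
        have hfac1 : GoodP (chainAll L h n hhid σ x) (i.1 + 1) 2
            (fun θ => (chainAll L h n hhid σ x) i.1 θ - (chainAll L h n hhid σ x) i.1 θ * (chainAll L h n hhid σ x) i.1 θ) :=
          ((hcvG.mono_deg (by omega)).add
            (((GoodP.const (d := 0) (-1)).mul (hcvG.mul hcvG)).mono_deg (by omega))).congr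
            (fun θ => by ring)
        have hfac2 : GoodP (chainAll L h n hhid σ x) (i.1 + 1) (3 * (L - 2) + 3)
            (fun θ => ∑ jj : Fin (n (L - 1 + 1)),
              pdv (fun θ => netPreact σ θ (x p) (L - 1) jj) w θ) := by
          refine GoodP.sum _ _ (fun jj _ => (hprep jj w (i.1 + 1) ?_).mono_deg ?_)
          · have hcomm : (L - 1) * h = h * (L - 1) := Nat.mul_comm _ _
            omega
          · rw [if_neg (by omega)]; omega
        exact (hfac1.mul hfac2).mono_deg (by omega)
      obtain ⟨P, hdeg, hev⟩ := hGoal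
      refine ⟨P, hdeg, fun θ _ => ?_⟩
      have hres : pdv ((chainAll L h n hhid σ x) i.1) w θ
          = MvPolynomial.eval (Sum.elim θ fun k : Fin (i.1 + 1) => (chainAll L h n hhid σ x) k.1 θ) P := by
        rw [hfe]; exact hev θ
      exact hres
  · -- the loss polynomial
    have hQ : GoodP (chainAll L h n hhid σ x) (m * (h * (L - 1) + 1)) 2
        (fun θ => (1 / (m : ℝ)) * ∑ p, (y p - logisticFn (netOutLin σ θ (x p))) ^ 2) := by
      refine ((GoodP.const (d := 0) (1 / (m : ℝ))).mul (GoodP.sum (d := 2) Finset.univ _ (fun p _ => ?_))).mono_deg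
        (by omega)
      have hlt : p.1 * (h * (L - 1) + 1) + h * (L - 1) < m * (h * (L - 1) + 1) := by
        have h1 : p.1 + 1 ≤ m := p.2
        have h2 : (p.1 + 1) * (h * (L - 1) + 1) ≤ m * (h * (L - 1) + 1) := Nat.mul_le_mul_right _ h1
        have h3 : (p.1 + 1) * (h * (L - 1) + 1) = p.1 * (h * (L - 1) + 1) + (h * (L - 1) + 1) := Nat.succ_mul _ _
        omega
      have hcv : GoodP (chainAll L h n hhid σ x) (m * (h * (L - 1) + 1)) 1 ((chainAll L h n hhid σ x) (p.1 * (h * (L - 1) + 1) + h * (L - 1))) :=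
        GoodP.chainvar _ hlt le_rfl
      have hG1 : GoodP (chainAll L h n hhid σ x) (m * (h * (L - 1) + 1)) 1
          (fun θ => y p + (-1) * (chainAll L h n hhid σ x) (p.1 * (h * (L - 1) + 1) + h * (L - 1)) θ) :=
        (GoodP.const (y p)).add (((GoodP.const (d := 0) (-1)).mul hcv).mono_deg (by omega))
      refine (hG1.mul hG1).congr (fun θ => ?_)
      rw [chainAll_out hhid σ x p θ]
      ring
    obtain ⟨Q, hdeg, hev⟩ := hQ
    exact ⟨Q, hdeg, fun θ _ => hev θ⟩
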